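/- Let p ≥ 0, q ≥ 1, s ≥ 1 be integers and define the sequence (f_n) by f_0 = s and f_n = p·f_{n-1} + q·∑_{k=0}^{n-1} f_k·f_{n-k-1} for n ≥ 1. Let r = 1/(p + 2qs + 2√((p+qs)qs)) and λ = √(rs/q). Then for every m ≥ 0 the partial sum S_m = ∑_{n=1}^{m} f_{n-1}·r^n satisfies S_m ≤ λ. -/

import Mathlib

theorem stmt_2 (p q s : ℕ) (hq : 1 ≤ q) (hs : 1 ≤ s)
    (f : ℕ → ℕ) (hf0 : f 0 = s)
    (hf : ∀ n : ℕ, f (n + 1) = p * f n + q * ∑ k ∈ Finset.range (n + 1), f k * f (n - k))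
    (r lam : ℝ)
    (hr : r = 1 / ((p : ℝ) + 2 * q * s + 2 * Real.sqrt (((p : ℝ) + q * s) * q * s)))
    (hlam : lam = Real.sqrt (r * s / q)) :
    ∀ m : ℕ, ∑ n ∈ Finset.range m, (f n : ℝ) * r ^ (n + 1) ≤ lam := by
  have hq' : (1:ℝ) ≤ (q:ℝ) := by exact_mod_cast hq
  have hs' : (1:ℝ) ≤ (s:ℝ) := by exact_mod_cast hs
  have hp' : (0:ℝ) ≤ (p:ℝ) := Nat.cast_nonneg p
  have hq0 : (q:ℝ) ≠ 0 := by linarith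
  have hD0 : (0:ℝ) ≤ ((p:ℝ) + q * s) * q * s := by positivity
  set t : ℝ := Real.sqrt (((p : ℝ) + q * s) * q * s) with htdef
  have hsq : t ^ 2 = ((p:ℝ) + q * s) * q * s := Real.sq_sqrt hD0
  have ht0 : 0 ≤ t := Real.sqrt_nonneg _
  have hden : (0:ℝ) < (p:ℝ) + 2 * q * s + 2 * t := by nlinarith
  have hr0 : 0 < r := by rw [hr]; positivity
  have hrden : r * ((p:ℝ) + 2 * q * s + 2 * t) = 1 := by
    rw [hr]; field_simp
  have h1pr : 1 - (p:ℝ) * r = r * (2 * q * s + 2 * t) := by linarith [hrden]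
  have h1pr0 : 0 ≤ 1 - (p:ℝ) * r := by
    rw [h1pr]; positivity
  have key : (1 - (p:ℝ) * r) ^ 2 = 4 * q * r * s := by
    have e1 : (1 - (p:ℝ) * r) ^ 2 = r ^ 2 * (2 * q * s + 2 * t) ^ 2 := by
      rw [h1pr]; ring
    have e2 : (4:ℝ) * q * r * s
        = r ^ 2 * (4 * q * s * ((p:ℝ) + 2 * q * s + 2 * t)) := by
      have : (4:ℝ) * q * r * s
          = 4 * q * r * s * (r * ((p:ℝ) + 2 * q * s + 2 * t)) := by
        rw [hrden]; ring
      rw [this]; ring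
    rw [e1, e2]
    have : (2 * (q:ℝ) * s + 2 * t) ^ 2
        = 4 * q * s * ((p:ℝ) + 2 * q * s + 2 * t) := by nlinarith [hsq]
    rw [this]
  have hlam_eq : lam = (1 - (p:ℝ) * r) / (2 * q) := by
    have hsq' : r * s / q = ((1 - (p:ℝ) * r) / (2 * q)) ^ 2 := by
      rw [div_pow, div_eq_div_iff hq0 (by positivity)]
      linear_combination (-(q:ℝ)) * key
    rw [hlam, hsq', Real.sqrt_sq (by positivity)]
  have hlam0 : 0 ≤ lam := by rw [hlam]; positivity
  have hfix : (s:ℝ) * r + (p:ℝ) * r * lam + (q:ℝ) * lam ^ 2 = lam := by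
    have hql : (q:ℝ) * lam ^ 2 = r * s := by
      rw [hlam, Real.sq_sqrt (by positivity)]
      field_simp
    rw [hql, hlam_eq]
    rw [eq_div_iff (by positivity : (2 * (q:ℝ)) ≠ 0)]
    field_simp
    linear_combination -key
  -- abbreviation for the summand
  set a : ℕ → ℝ := fun i => (f i : ℝ) * r ^ (i + 1) with ha
  have ha0 : ∀ i, 0 ≤ a i := fun i =>
    mul_nonneg (Nat.cast_nonneg _) (pow_nonneg hr0.le _)
  intro m
  induction m with
  | zero => simpa using hlam0
  | succ m ih =>
    have hS0 : 0 ≤ ∑ n ∈ Finset.range m, a n :=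
      Finset.sum_nonneg fun i _ => ha0 i
    -- recurrence for each term
    have hstep : ∀ n : ℕ, a (n + 1)
        = (p:ℝ) * r * a n
          + (q:ℝ) * ∑ k ∈ Finset.range (n + 1), a k * a (n - k) := by
      intro n
      have hconv : ∑ k ∈ Finset.range (n + 1), a k * a (n - k)
          = (∑ k ∈ Finset.range (n + 1), ((f k : ℝ) * (f (n - k) : ℝ))) * r ^ (n + 2) := by
        rw [Finset.sum_mul]
        refine Finset.sum_congr rfl fun k hk => ?_
        have hk' : k ≤ n := Nat.lt_succ_iff.mp (Finset.mem_range.mp hk)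
        simp only [ha]
        rw [show n + 2 = (k + 1) + (n - k + 1) by omega, pow_add]
        ring
      simp only [ha, hf n]
      push_cast
      rw [hconv]
      ring
    have hsum : ∑ n ∈ Finset.range (m + 1), a n
        = (s:ℝ) * r + (p:ℝ) * r * (∑ n ∈ Finset.range m, a n)
          + (q:ℝ) * ∑ n ∈ Finset.range m,
              ∑ k ∈ Finset.range (n + 1), a k * a (n - k) := by
      rw [Finset.sum_range_succ']
      have ha0' : a 0 = (s:ℝ) * r := by simp [ha, hf0]
      rw [ha0']
      rw [Finset.sum_congr rfl fun n _ => hstep n]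
      rw [Finset.sum_add_distrib, ← Finset.mul_sum, ← Finset.mul_sum]
      ring
    -- convolution bound
    have hconvle : ∑ n ∈ Finset.range m,
          ∑ k ∈ Finset.range (n + 1), a k * a (n - k)
        ≤ (∑ n ∈ Finset.range m, a n) ^ 2 := by
      have hsq2 : (∑ n ∈ Finset.range m, a n) ^ 2
          = ∑ x ∈ Finset.range m ×ˢ Finset.range m, a x.1 * a x.2 := by
        rw [sq, Finset.sum_mul_sum, Finset.sum_product]
      rw [hsq2]
      rw [Finset.sum_sigma']
      set S := (Finset.range m).sigma fun n => Finset.range (n + 1) with hS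
      have himg : ∑ x ∈ S, a x.2 * a (x.1 - x.2)
          = ∑ y ∈ S.image (fun x : Σ _ : ℕ, ℕ => (x.2, x.1 - x.2)),
              a y.1 * a y.2 := by
        rw [Finset.sum_image]
        rintro ⟨n, k⟩ hx ⟨n', k'⟩ hx' he
        simp only [hS, Finset.mem_sigma, Finset.mem_range] at hx hx'
        simp only [Prod.mk.injEq] at he
        obtain ⟨h1, h2⟩ := he
        have : n = n' := by
          have h1' : k = k' := h1
          have h2' : n - k = n' - k' := h2
          have hx1 : k < n + 1 :=
            Finset.mem_range.mp ((Finset.mem_sigma (s := Finset.range m) (t := fun n => Finset.range (n + 1)) (a := ⟨n, k⟩)).mp hx).2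
          have hx2 : k' < n' + 1 :=
            Finset.mem_range.mp ((Finset.mem_sigma (s := Finset.range m) (t := fun n => Finset.range (n + 1)) (a := ⟨n', k'⟩)).mp hx').2
          omega
        subst this; subst h1; rfl
      rw [himg]
      refine Finset.sum_le_sum_of_subset_of_nonneg ?_ fun y _ _ =>
        mul_nonneg (ha0 _) (ha0 _)
      intro y hy
      simp only [Finset.mem_image] at hy
      obtain ⟨⟨n, k⟩, hx, rfl⟩ := hy
      simp only [hS, Finset.mem_sigma, Finset.mem_range] at hx
      simp only [Finset.mem_product, Finset.mem_range]
      omega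
    -- put it together
    rw [hsum]
    have hSle : (∑ n ∈ Finset.range m, a n) ^ 2 ≤ lam ^ 2 :=
      pow_le_pow_left₀ hS0 ih 2
    have t1 : (p:ℝ) * r * (∑ n ∈ Finset.range m, a n) ≤ (p:ℝ) * r * lam :=
      mul_le_mul_of_nonneg_left ih (mul_nonneg hp' hr0.le)
    have t2 : (q:ℝ) * (∑ n ∈ Finset.range m,
          ∑ k ∈ Finset.range (n + 1), a k * a (n - k))
        ≤ (q:ℝ) * (∑ n ∈ Finset.range m, a n) ^ 2 :=
      mul_le_mul_of_nonneg_left hconvle (by positivity)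
    have t3 : (q:ℝ) * (∑ n ∈ Finset.range m, a n) ^ 2 ≤ (q:ℝ) * lam ^ 2 :=
      mul_le_mul_of_nonneg_left hSle (by positivity)
    linarith [t1, t2, t3, hfix]
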